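/- Let φ : S_6 → S_6 be an outer automorphism, and let N be a subgroup of index 2 in the stabilizer of some point i ∈ {0,...,5} (so |N| = 60). Then φ(N) acts doubly transitively on {0,...,5}. -/

import Mathlib

open Equiv Equiv.Perm MulAction

theorem powfix {α : Type*} (g : Perm α) {b : α} (h : g b = b) (n : ℕ) : (g ^ n) b = b := by
  induction n with
  | zero => simp
  | succ n ih => rw [pow_succ, Perm.mul_apply, h, ih]

theorem fixOfPowFix (g : Perm (Fin 6)) (h5 : orderOf g = 5) {b : Fin 6} {m : ℕ}
    (hm0 : 0 < m) (hm5 : m < 5) (hfix : (g ^ m) b = b) : g b = b := by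
  obtain ⟨u, v, huv⟩ : ∃ u v, m * u = 5 * v + 1 := by
    interval_cases m
    · exact ⟨1, 0, rfl⟩
    · exact ⟨3, 1, rfl⟩
    · exact ⟨2, 1, rfl⟩
    · exact ⟨4, 3, rfl⟩
  have : g ^ (m * u) = g := by
    rw [huv, pow_add, pow_mul, pow_one, ← h5, pow_orderOf_eq_one, one_pow, one_mul]
  rw [← this, pow_mul]
  exact powfix _ hfix u

theorem inj5 (g : Perm (Fin 6)) (h5 : orderOf g = 5) {b : Fin 6} (hb : g b ≠ b) :
    Function.Injective fun k : Fin 5 => (g ^ (k : ℕ)) b := by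
  have key : ∀ j k : ℕ, j ≤ k → k < 5 → (g ^ j) b = (g ^ k) b → j = k := by
    intro j k hjk hk5 h
    by_contra hne
    have hmfix : (g ^ (k - j)) b = b := by
      have : (g ^ j) ((g ^ (k - j)) b) = (g ^ j) b := by
        rw [← Perm.mul_apply, ← pow_add, Nat.add_sub_cancel' hjk, h]
      exact (g ^ j).injective this
    exact hb (fixOfPowFix g h5 (by omega) (by omega) hmfix)
  intro j k h
  simp only at h
  rcases le_total (j : ℕ) (k : ℕ) with hle | hle
  · exact Fin.ext (key j k hle k.isLt h)
  · exact (Fin.ext (key k j hle j.isLt h.symm)).symm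

theorem order5_struct (g : Perm (Fin 6)) (h5 : orderOf g = 5) :
    ∃ p, g p = p ∧ ∀ x, x ≠ p → g x ≠ x := by
  have hg1 : g ≠ 1 := by rintro rfl; simp at h5
  obtain ⟨y, hy⟩ : ∃ y, g y ≠ y := by
    by_contra h; push_neg at h; exact hg1 (Equiv.ext h)
  set f : Fin 5 → Fin 6 := fun k => (g ^ (k : ℕ)) y with hf
  have hinj : Function.Injective f := inj5 g h5 hy
  set B : Finset (Fin 6) := Finset.univ.image f with hB
  have hBcard : B.card = 5 := by
    rw [hB, Finset.card_image_of_injective _ hinj, Finset.card_univ, Fintype.card_fin]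
  have hCcard : (Finset.univ \ B).card = 1 := by
    rw [Finset.card_sdiff_of_subset (Finset.subset_univ B), Finset.card_univ, Fintype.card_fin, hBcard]
  obtain ⟨p, hp⟩ := Finset.card_eq_one.mp hCcard
  have hpB : p ∉ B := by
    have : p ∈ Finset.univ \ B := hp ▸ Finset.mem_singleton_self p
    exact (Finset.mem_sdiff.mp this).2
  have hgmem : ∀ k : ℕ, (g ^ k) y ∈ B := by
    intro k
    have : (g ^ (k % 5)) y ∈ B := by
      rw [hB]
      refine Finset.mem_image.mpr ⟨⟨k % 5, Nat.mod_lt _ (by norm_num)⟩, Finset.mem_univ _, rfl⟩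
    rwa [← h5, pow_mod_orderOf] at this
  have h51 : g ^ 5 = 1 := h5 ▸ pow_orderOf_eq_one g
  refine ⟨p, ?_, ?_⟩
  · -- g p = p
    by_contra hne
    have hgp : g p ∈ B := by
      by_contra hgp
      have : g p ∈ Finset.univ \ B := Finset.mem_sdiff.mpr ⟨Finset.mem_univ _, hgp⟩
      rw [hp, Finset.mem_singleton] at this
      exact hne this
    obtain ⟨k, _, hk⟩ := Finset.mem_image.mp hgp
    have h2 : (g ^ 4) (g p) = p := by
      rw [← Perm.mul_apply, ← pow_succ]
      show (g ^ 5) p = p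
      rw [h51]; rfl
    have hpy : p = (g ^ (4 + (k : ℕ))) y := by
      rw [← h2, ← hk, hf]
      simp [← Perm.mul_apply, ← pow_add]
    exact hpB (hpy ▸ hgmem _)
  · -- ∀ x ≠ p, g x ≠ x
    intro x hxp hgx
    have hxB : x ∈ B := by
      by_contra hxB
      have : x ∈ Finset.univ \ B := Finset.mem_sdiff.mpr ⟨Finset.mem_univ _, hxB⟩
      rw [hp, Finset.mem_singleton] at this
      exact hxp this
    obtain ⟨k, _, hk⟩ := Finset.mem_image.mp hxB
    rw [hf] at hk
    simp only at hk
    have hkk : (g ^ (k : ℕ)) (g y) = (g ^ (k : ℕ)) y := by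
      rw [← Perm.mul_apply, ← pow_succ, pow_succ', Perm.mul_apply, hk, hgx]
    exact hy ((g ^ (k : ℕ)).injective hkk)

theorem stabCard (k : Fin 6) : Nat.card (stabilizer (Perm (Fin 6)) k) = 120 := by
  have horb : orbit (Perm (Fin 6)) k = Set.univ := by
    ext j; simp only [Set.mem_univ, iff_true]
    exact ⟨Equiv.swap k j, by simp [Perm.smul_def]⟩
  have hidx : (stabilizer (Perm (Fin 6)) k).index = 6 := by
    rw [index_stabilizer, horb, Set.ncard_univ]; simp
  have h2 := Subgroup.card_mul_index (stabilizer (Perm (Fin 6)) k)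
  have hG : Nat.card (Perm (Fin 6)) = 720 := by
    simp [Nat.card_eq_fintype_card, Fintype.card_perm, Nat.factorial]
  rw [hidx, hG] at h2
  omega

def Aj (j : Fin 6) : Subgroup (Perm (Fin 6)) :=
  MulAction.stabilizer (Perm (Fin 6)) j ⊓ alternatingGroup (Fin 6)

theorem mem_Aj {j : Fin 6} {t : Perm (Fin 6)} : t ∈ Aj j ↔ t j = j ∧ Perm.sign t = 1 := by
  simp [Aj, Subgroup.mem_inf, MulAction.mem_stabilizer_iff, Perm.smul_def,
    Equiv.Perm.mem_alternatingGroup]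

theorem moveIt (j k : Fin 6) (hkj : k ≠ j) : ∃ c ∈ Aj j, c k ≠ k := by
  have hcard : 1 < ((Finset.univ : Finset (Fin 6)) \ {j, k}).card := by
    have h2 : ({j, k} : Finset (Fin 6)).card ≤ 2 := Finset.card_insert_le _ _ |>.trans (by simp)
    have := Finset.card_sdiff_of_subset (Finset.subset_univ ({j, k} : Finset (Fin 6)))
    simp only [Finset.card_univ, Fintype.card_fin] at this
    omega
  obtain ⟨u, hu, v, hv, huv⟩ := Finset.one_lt_card.mp hcard
  simp only [Finset.mem_sdiff, Finset.mem_univ, Finset.mem_insert, Finset.mem_singleton,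
    true_and, not_or] at hu hv
  refine ⟨Equiv.swap k u * Equiv.swap u v, ?_, ?_⟩
  · rw [mem_Aj]
    constructor
    · rw [Perm.mul_apply, Equiv.swap_apply_of_ne_of_ne (Ne.symm hu.1) (Ne.symm hv.1),
        Equiv.swap_apply_of_ne_of_ne hkj.symm (Ne.symm hu.1)]
    · rw [map_mul, Equiv.Perm.sign_swap (fun h => hu.2 h.symm), Equiv.Perm.sign_swap huv]
      simp
  · rw [Perm.mul_apply, Equiv.swap_apply_of_ne_of_ne (Ne.symm hu.2) (Ne.symm hv.2),
      Equiv.swap_apply_left]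
    exact hu.2

theorem stab_inj {k l : Fin 6} (h : MulAction.stabilizer (Perm (Fin 6)) k
    = MulAction.stabilizer (Perm (Fin 6)) l) : k = l := by
  by_contra hkl
  obtain ⟨c, hc, hck⟩ := moveIt l k hkl
  have hcl : c ∈ MulAction.stabilizer (Perm (Fin 6)) l := (Subgroup.mem_inf.mp hc).1
  rw [← h] at hcl
  exact hck hcl

theorem cardP {j : Fin 6} {P : Subgroup (Perm (Fin 6))}
    (hle : P ≤ MulAction.stabilizer (Perm (Fin 6)) j)
    (hstabcard : Nat.card (MulAction.stabilizer (Perm (Fin 6)) j) = 120)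
    (hidx : P.relIndex (MulAction.stabilizer (Perm (Fin 6)) j) = 2) : Nat.card P = 60 := by
  have h1 := Subgroup.card_mul_index (P.subgroupOf (MulAction.stabilizer (Perm (Fin 6)) j))
  rw [hstabcard] at h1
  have h2 : Nat.card (P.subgroupOf (MulAction.stabilizer (Perm (Fin 6)) j)) = Nat.card P :=
    Nat.card_congr (Subgroup.subgroupOfEquivOfLe hle).toEquiv
  rw [h2] at h1
  rw [Subgroup.relIndex] at hidx
  rw [hidx] at h1
  omega

theorem lemU {j : Fin 6} {P : Subgroup (Perm (Fin 6))}
    (hle : P ≤ MulAction.stabilizer (Perm (Fin 6)) j)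
    (hidx : P.relIndex (MulAction.stabilizer (Perm (Fin 6)) j) = 2) : P = Aj j := by
  set S := MulAction.stabilizer (Perm (Fin 6)) j with hS
  have hAP : Aj j ≤ P := by
    intro σ hσ
    rw [mem_Aj] at hσ
    obtain ⟨hσj, hσs⟩ := hσ
    have hp : ∀ x : Fin 6, x ≠ j ↔ σ x ≠ j := by
      intro x
      constructor
      · intro hx h
        exact hx (σ.injective (h.trans hσj.symm))
      · intro hx h
        exact hx (h ▸ hσj)
    set σ' := σ.subtypePerm (p := fun x => x ≠ j) (fun x => (hp x).symm) with hσ'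
    have hof : Equiv.Perm.ofSubtype σ' = σ :=
      Equiv.Perm.ofSubtype_subtypePerm (p := fun x => x ≠ j) (fun x => (hp x).symm) (fun x hx => fun hxj => hx (by rw [hxj, hσj]))
    have hσ'alt : σ' ∈ alternatingGroup {x : Fin 6 // x ≠ j} := by
      rw [Equiv.Perm.mem_alternatingGroup]
      have := Equiv.Perm.sign_ofSubtype σ'
      rw [hof] at this
      rw [← this, hσs]
    rw [← Equiv.Perm.closure_three_cycles_eq_alternating] at hσ'alt
    have hmap : σ ∈ Subgroup.map (Equiv.Perm.ofSubtype :
        Perm {x : Fin 6 // x ≠ j} →* Perm (Fin 6))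
        (Subgroup.closure {c : Perm {x : Fin 6 // x ≠ j} | c.IsThreeCycle}) :=
      ⟨σ', hσ'alt, hof⟩
    rw [MonoidHom.map_closure] at hmap
    have himg : ((Equiv.Perm.ofSubtype : Perm {x : Fin 6 // x ≠ j} →* Perm (Fin 6)) ''
        {c : Perm {x : Fin 6 // x ≠ j} | c.IsThreeCycle}) ⊆ ↑P := by
      rintro w ⟨c, hc, rfl⟩
      have hc3 : orderOf c = 3 := hc.orderOf
      have hw3 : (Equiv.Perm.ofSubtype c) ^ 3 = 1 := by
        rw [← map_pow, ← hc3, pow_orderOf_eq_one, map_one]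
      have hwj : (Equiv.Perm.ofSubtype c) j = j :=
        Equiv.Perm.ofSubtype_apply_of_not_mem c (by simp)
      have hw2S : (Equiv.Perm.ofSubtype c) ^ 2 ∈ S := by
        rw [hS, MulAction.mem_stabilizer_iff, Perm.smul_def, pow_two, Perm.mul_apply, hwj, hwj]
      have hsq := Subgroup.sq_mem_of_index_two (H := P.subgroupOf S) hidx ⟨_, hw2S⟩
      rw [Subgroup.mem_subgroupOf] at hsq
      have hco : (((⟨_, hw2S⟩ : S) ^ 2 : S) : Perm (Fin 6))
          = (Equiv.Perm.ofSubtype c) ^ 4 := by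
        push_cast
        rw [← pow_mul]
      rw [hco] at hsq
      have h4 : (Equiv.Perm.ofSubtype c) ^ 4 = Equiv.Perm.ofSubtype c := by
        rw [show (4 : ℕ) = 3 + 1 from rfl, pow_succ, hw3, one_mul]
      rwa [h4] at hsq
    exact (Subgroup.closure_le P).mpr himg hmap
  refine le_antisymm ?_ hAP
  intro x hx
  by_contra hxA
  rw [mem_Aj] at hxA
  push_neg at hxA
  have hxj : x j = j := hle hx
  have hxsign : Perm.sign x = -1 := by
    rcases Int.units_eq_one_or (Perm.sign x) with h | h
    · exact absurd h (hxA hxj)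
    · exact h
  have htop : P.subgroupOf S = ⊤ := by
    rw [Subgroup.eq_top_iff']
    intro s
    rw [Subgroup.mem_subgroupOf]
    rcases Int.units_eq_one_or (Perm.sign (s : Perm (Fin 6))) with h | h
    · exact hAP (mem_Aj.mpr ⟨s.2, h⟩)
    · have hmem : x⁻¹ * (s : Perm (Fin 6)) ∈ Aj j := by
        rw [mem_Aj]
        constructor
        · rw [Perm.mul_apply]
          have hsj : (s : Perm (Fin 6)) j = j := s.2
          rw [hsj]
          have h2 : x⁻¹ (x j) = x⁻¹ j := congrArg (fun z => x⁻¹ z) hxj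
          rw [Perm.coe_inv, Equiv.symm_apply_apply] at h2
          exact h2.symm
        · rw [map_mul, map_inv, hxsign, h]
          rfl
      have := mul_mem hx (hAP hmem)
      rwa [mul_inv_cancel_left] at this
  rw [Subgroup.relIndex, htop, Subgroup.index_top] at hidx
  exact absurd hidx (by norm_num)

theorem conjAj {j : Fin 6} {s : Perm (Fin 6)} (hs : s j = j) :
    Subgroup.map (MulAut.conj s).toMonoidHom (Aj j) = Aj j := by
  have key : ∀ t : Perm (Fin 6), (s⁻¹ * t * s) j = j ↔ t j = j := by
    intro t
    rw [Perm.mul_apply, Perm.mul_apply, hs, Equiv.Perm.inv_eq_iff_eq, hs]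
  ext t
  rw [Subgroup.mem_map_equiv, MulAut.conj_symm_apply, mem_Aj, mem_Aj, key]
  have hsgn : Perm.sign (s⁻¹ * t * s) = Perm.sign t := by
    rw [map_mul, map_mul, map_inv, mul_comm ((Perm.sign s)⁻¹), mul_assoc, inv_mul_cancel, mul_one]
  rw [hsgn]

theorem mapmap (φ : MulAut (Perm (Fin 6))) (g : Perm (Fin 6)) (H : Subgroup (Perm (Fin 6))) :
    Subgroup.map φ.toMonoidHom (Subgroup.map (MulAut.conj g).toMonoidHom H)
      = Subgroup.map (MulAut.conj (φ g)).toMonoidHom (Subgroup.map φ.toMonoidHom H) := by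
  rw [Subgroup.map_map, Subgroup.map_map]
  congr 1
  ext x
  simp

/-- If `φ` is an outer automorphism of `S_6` and `N` is a subgroup of index `2` in the
stabilizer of some point `i`, then `φ(N)` acts doubly transitively on `{0,…,5}`. -/
theorem stmt14 (φ : MulAut (Equiv.Perm (Fin 6)))
    (houter : ¬ ∃ g : Equiv.Perm (Fin 6), ∀ x, φ x = g * x * g⁻¹)
    (i : Fin 6) (N : Subgroup (Equiv.Perm (Fin 6)))
    (hNs : N ≤ MulAction.stabilizer (Equiv.Perm (Fin 6)) i)
    (hidx : N.relIndex (MulAction.stabilizer (Equiv.Perm (Fin 6)) i) = 2) :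
    ∀ a b c d : Fin 6, a ≠ b → c ≠ d →
      ∃ x ∈ Subgroup.map φ.toMonoidHom N, x a = c ∧ x b = d := by
  have hNA : N = Aj i := lemU hNs hidx
  have hNcard : Nat.card N = 60 := cardP hNs (stabCard i) hidx
  set M := Subgroup.map φ.toMonoidHom N with hM
  have hφinj : Function.Injective φ.toMonoidHom := φ.injective
  have hMcard : Nat.card M = 60 := by
    rw [← hNcard]
    exact (Nat.card_congr (Subgroup.equivMapOfInjective N φ.toMonoidHom hφinj).toEquiv).symm
  -- M has no global fixed point
  have hnofix : ∀ j : Fin 6, ∃ m ∈ M, m j ≠ j := by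
    intro j
    by_contra hcon
    push_neg at hcon
    have hMle : M ≤ MulAction.stabilizer (Perm (Fin 6)) j := by
      intro m hm
      exact (hcon m hm : _)
    have hMidx : M.relIndex (MulAction.stabilizer (Perm (Fin 6)) j) = 2 := by
      have h1 := Subgroup.card_mul_index (M.subgroupOf (MulAction.stabilizer (Perm (Fin 6)) j))
      have h2 : Nat.card (M.subgroupOf (MulAction.stabilizer (Perm (Fin 6)) j)) = 60 :=
        (Nat.card_congr (Subgroup.subgroupOfEquivOfLe hMle).toEquiv).trans hMcard
      rw [h2, stabCard j] at h1
      rw [Subgroup.relIndex]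
      omega
    have hMA : M = Aj j := lemU hMle hMidx
    -- φ maps (stab i) into (stab j)
    have hφS : Subgroup.map φ.toMonoidHom (MulAction.stabilizer (Perm (Fin 6)) i)
        ≤ MulAction.stabilizer (Perm (Fin 6)) j := by
      rintro _ ⟨s, hsi, rfl⟩
      have hsii : s i = i := hsi
      have hconj : Subgroup.map (MulAut.conj (φ s)).toMonoidHom M = M := by
        rw [hM, ← mapmap φ s N]
        conv_lhs => rw [hNA, conjAj hsii, ← hNA]
      show (φ.toMonoidHom s) • j = j
      rw [Perm.smul_def]
      by_contra hne
      obtain ⟨c, hcA, hck⟩ := moveIt j ((φ s) j) hne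
      rw [← hMA, ← hconj] at hcA
      obtain ⟨σ, hσM, hcσ⟩ := hcA
      have hσj : σ j = j := hcon σ hσM
      have : c ((φ s) j) = (φ s) j := by
        have hcσ' : (φ s) * σ * (φ s)⁻¹ = c := hcσ
        rw [← hcσ', Perm.mul_apply, Perm.mul_apply, Perm.coe_inv, Equiv.symm_apply_apply, hσj]
      exact hck this
    have hφScard : Nat.card (Subgroup.map φ.toMonoidHom
        (MulAction.stabilizer (Perm (Fin 6)) i)) = 120 := by
      rw [← stabCard i]
      exact (Nat.card_congr (Subgroup.equivMapOfInjective _ φ.toMonoidHom hφinj).toEquiv).symm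
    have hφSeq : Subgroup.map φ.toMonoidHom (MulAction.stabilizer (Perm (Fin 6)) i)
        = MulAction.stabilizer (Perm (Fin 6)) j :=
      Subgroup.eq_of_le_of_card_ge hφS (by rw [hφScard, stabCard j])
    -- the induced map on points
    set σm : Fin 6 → Fin 6 := fun k => (φ (Equiv.swap i k)) j with hσm
    have hstabk : ∀ k, Subgroup.map φ.toMonoidHom (MulAction.stabilizer (Perm (Fin 6)) k)
        = MulAction.stabilizer (Perm (Fin 6)) (σm k) := by
      intro k
      have h1 : (Equiv.swap i k) • i = k := by rw [Perm.smul_def, Equiv.swap_apply_left]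
      have h2 : MulAction.stabilizer (Perm (Fin 6)) k
          = Subgroup.map (MulAut.conj (Equiv.swap i k)).toMonoidHom
            (MulAction.stabilizer (Perm (Fin 6)) i) := by
        have := MulAction.stabilizer_smul_eq_stabilizer_map_conj (Equiv.swap i k) i
        rwa [h1] at this
      have h3 : MulAction.stabilizer (Perm (Fin 6)) (σm k)
          = Subgroup.map (MulAut.conj (φ (Equiv.swap i k))).toMonoidHom
            (MulAction.stabilizer (Perm (Fin 6)) j) := by
        have h4 := MulAction.stabilizer_smul_eq_stabilizer_map_conj (φ (Equiv.swap i k)) j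
        have h5 : (φ (Equiv.swap i k)) • j = σm k := rfl
        rwa [h5] at h4
      rw [h2, mapmap, hφSeq, h3]
    have hσinj : Function.Injective σm := by
      intro k l hkl
      have : Subgroup.map φ.toMonoidHom (MulAction.stabilizer (Perm (Fin 6)) k)
          = Subgroup.map φ.toMonoidHom (MulAction.stabilizer (Perm (Fin 6)) l) := by
        rw [hstabk k, hstabk l, hkl]
      exact stab_inj (Subgroup.map_injective hφinj this)
    have hσbij : Function.Bijective σm := Finite.injective_iff_bijective.mp hσinj
    have hkey : ∀ (s : Perm (Fin 6)) (k : Fin 6), (φ s) (σm k) = σm (s k) := by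
      intro s k
      have h1 : MulAction.stabilizer (Perm (Fin 6)) (s k)
          = Subgroup.map (MulAut.conj s).toMonoidHom
            (MulAction.stabilizer (Perm (Fin 6)) k) := by
        have h4 := MulAction.stabilizer_smul_eq_stabilizer_map_conj s k
        have h5 : s • k = s k := rfl
        rwa [h5] at h4
      have h2 : MulAction.stabilizer (Perm (Fin 6)) (σm (s k))
          = MulAction.stabilizer (Perm (Fin 6)) ((φ s) (σm k)) := by
        rw [← hstabk (s k), h1, mapmap, hstabk k]
        have h4 := MulAction.stabilizer_smul_eq_stabilizer_map_conj (φ s) (σm k)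
        have h5 : (φ s) • (σm k) = (φ s) (σm k) := rfl
        rw [h5] at h4
        exact h4.symm
      exact (stab_inj h2).symm
    refine houter ⟨Equiv.ofBijective σm hσbij, fun x => ?_⟩
    apply Equiv.ext
    intro z
    set e := Equiv.ofBijective σm hσbij with he
    have hez : ∀ w, e w = σm w := fun w => rfl
    rw [Perm.mul_apply, Perm.mul_apply]
    have : z = e (e⁻¹ z) := (Equiv.apply_symm_apply e z).symm
    calc (φ x) z = (φ x) (σm (e⁻¹ z)) := by rw [← hez, ← this]
    _ = σm (x (e⁻¹ z)) := hkey x _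
    _ = e (x (e⁻¹ z)) := rfl
  -- get an element of order 5
  haveI : Fintype M := Fintype.ofFinite M
  haveI : Fact (Nat.Prime 5) := ⟨by norm_num⟩
  obtain ⟨g0, hg0⟩ := exists_prime_orderOf_dvd_card (G := M) 5
    (by rw [← Nat.card_eq_fintype_card, hMcard]; norm_num)
  set g : Perm (Fin 6) := (g0 : Perm (Fin 6)) with hg
  have hgM : g ∈ M := g0.2
  have hg5 : orderOf g = 5 := by
    rw [hg, ← hg0]
    exact orderOf_injective M.subtype M.subtype_injective g0
  obtain ⟨p, hpfix, hpmove⟩ := order5_struct g hg5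
  -- transitivity: everything is reachable from some base point y
  obtain ⟨y, hy⟩ : ∃ y, g y ≠ y := by
    have : g ≠ 1 := by
      intro h; rw [h] at hg5; simp at hg5
    by_contra h; push_neg at h; exact this (Equiv.ext h)
  have hreach : ∀ z : Fin 6, ∃ m ∈ M, m y = z := by
    have hinj := inj5 g hg5 hy
    set B : Finset (Fin 6) := Finset.univ.image (fun k : Fin 5 => (g ^ (k : ℕ)) y) with hB
    have hBcard : B.card = 5 := by
      rw [hB, Finset.card_image_of_injective _ hinj, Finset.card_univ, Fintype.card_fin]
    have hBmem : ∀ z ∈ B, ∃ m ∈ M, m y = z := by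
      intro z hz
      obtain ⟨k, _, hk⟩ := Finset.mem_image.mp hz
      exact ⟨g ^ (k : ℕ), pow_mem hgM _, hk⟩
    have hpB : p ∉ B := by
      intro hp
      obtain ⟨k, _, hk⟩ := Finset.mem_image.mp hp
      have : g ((g ^ (k : ℕ)) y) ≠ (g ^ (k : ℕ)) y := by
        intro h
        exact hy ((g ^ (k : ℕ)).injective
          (by rwa [← Perm.mul_apply, ← pow_succ', pow_succ, Perm.mul_apply] at h))
      rw [hk, hpfix] at this
      exact this rfl
    have hcompl : ∀ z : Fin 6, z ∉ B → z = p := by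
      intro z hz
      by_contra hzp
      have hsub : insert p (insert z B) ⊆ Finset.univ := Finset.subset_univ _
      have h7 : (insert p (insert z B)).card = 7 := by
        rw [Finset.card_insert_of_notMem (by simp only [Finset.mem_insert, not_or]; exact ⟨fun h => hzp h.symm, hpB⟩),
          Finset.card_insert_of_notMem hz, hBcard]
      have h8 := Finset.card_le_card hsub
      rw [h7, Finset.card_univ, Fintype.card_fin] at h8
      omega
    intro z
    by_cases hzB : z ∈ B
    · exact hBmem z hzB
    · -- z = p; reach p
      obtain ⟨m0, hm0M, hm0⟩ := hnofix p
      have hm0B : m0 p ∈ B := by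
        by_contra h
        exact hm0 (hcompl _ h)
      obtain ⟨k, _, hk⟩ := Finset.mem_image.mp hm0B
      refine ⟨m0⁻¹ * g ^ (k : ℕ), mul_mem (inv_mem hm0M) (pow_mem hgM _), ?_⟩
      rw [Perm.mul_apply, hk, Perm.inv_eq_iff_eq]
      rw [hcompl z hzB]
    -- done
  intro a b c d hab hcd
  obtain ⟨ma, hmaM, hma⟩ := hreach a
  obtain ⟨mc, hmcM, hmc⟩ := hreach c
  obtain ⟨mp, hmpM, hmp⟩ := hreach p
  set x1 : Perm (Fin 6) := mc * ma⁻¹ with hx1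
  have hx1M : x1 ∈ M := mul_mem hmcM (inv_mem hmaM)
  have hx1a : x1 a = c := by
    rw [hx1, Perm.mul_apply, ← hma, Perm.coe_inv, Equiv.symm_apply_apply, hmc]
  set m2 : Perm (Fin 6) := mc * mp⁻¹ with hm2
  have hm2M : m2 ∈ M := mul_mem hmcM (inv_mem hmpM)
  have hm2p : m2 p = c := by
    rw [hm2, Perm.mul_apply, ← hmp, Perm.coe_inv, Equiv.symm_apply_apply, hmc]
  set τ : Perm (Fin 6) := m2 * g * m2⁻¹ with hτ
  have hτM : τ ∈ M := mul_mem (mul_mem hm2M hgM) (inv_mem hm2M)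
  have hτ5 : orderOf τ = 5 := by
    rw [hτ, ← hg5]
    have : m2 * g * m2⁻¹ = (MulAut.conj m2) g := rfl
    rw [this]
    exact orderOf_injective (MulAut.conj m2).toMonoidHom (MulAut.conj m2).injective g
  have hτc : τ c = c := by
    rw [hτ, Perm.mul_apply, Perm.mul_apply, ← hm2p, Perm.coe_inv, Equiv.symm_apply_apply, hpfix, hm2p]
  have hτmove : ∀ z, z ≠ c → τ z ≠ z := by
    intro z hz h
    rw [hτ, Perm.mul_apply, Perm.mul_apply] at h
    have h2 : g (m2⁻¹ z) = m2⁻¹ z := by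
      have := congrArg (fun w => m2⁻¹ w) h
      simpa using this
    have h3 : m2⁻¹ z = p := by
      by_contra h4
      exact hpmove _ h4 h2
    have : z = c := by rw [← hm2p, ← h3, Perm.coe_inv, Equiv.apply_symm_apply]
    exact hz this
  set b' : Fin 6 := x1 b with hb'
  have hb'c : b' ≠ c := by
    rw [hb', ← hx1a]
    intro h
    exact hab (x1.injective h).symm
  have hτb' : τ b' ≠ b' := hτmove b' hb'c
  have hinjτ := inj5 τ hτ5 hτb'
  set F : Finset (Fin 6) := Finset.univ.image (fun k : Fin 5 => (τ ^ (k : ℕ)) b') with hF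
  have hFcard : F.card = 5 := by
    rw [hF, Finset.card_image_of_injective _ hinjτ, Finset.card_univ, Fintype.card_fin]
  have hFsub : F ⊆ Finset.univ.filter (· ≠ c) := by
    intro z hz
    obtain ⟨k, _, hk⟩ := Finset.mem_image.mp hz
    rw [Finset.mem_filter]
    refine ⟨Finset.mem_univ _, ?_⟩
    intro hzc
    have : (τ ^ (k : ℕ)) b' = (τ ^ (k : ℕ)) c := by
      rw [hk, hzc, powfix τ hτc]
    exact hb'c ((τ ^ (k : ℕ)).injective this)
  have hfiltcard : (Finset.univ.filter (· ≠ c)).card = 5 := by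
    rw [Finset.filter_ne', Finset.card_erase_of_mem (Finset.mem_univ c),
      Finset.card_univ, Fintype.card_fin]
  have hFeq : F = Finset.univ.filter (· ≠ c) :=
    Finset.eq_of_subset_of_card_le hFsub (by rw [hFcard, hfiltcard])
  have hdF : d ∈ F := by
    rw [hFeq, Finset.mem_filter]
    exact ⟨Finset.mem_univ _, hcd.symm⟩
  obtain ⟨k, _, hk⟩ := Finset.mem_image.mp hdF
  refine ⟨τ ^ (k : ℕ) * x1, mul_mem (pow_mem hτM _) hx1M, ?_, ?_⟩
  · rw [Perm.mul_apply, hx1a, powfix τ hτc]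
  · rw [Perm.mul_apply, ← hb', hk]
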